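/- Let 𝔍 be a Lie algebra over a field which decomposes as a direct sum of subspaces 𝔍 = 𝔍₊ ⊕ 𝔍₀ ⊕ 𝔍₋ where 𝔍₊, 𝔍₋, 𝔍₀ are Lie subalgebras, 𝔍₀ is abelian, and [𝔍±, 𝔍₀] ⊆ 𝔍±. Let P₊, P₋, P₀ be the projections onto the summands and r = (1/2)(P₊ - P₋). Then for any linear operators a, b, c, d on 𝔍₀, the operator R on 𝔍 ⊕ 𝔍 given in block form by R = [[r + a P₀, b P₀],[c P₀, r + d P₀]] satisfies the modified classical Yang-Baxter equation: [RX, RY] - R([RX, Y] + [X, RY]) = -(1/4)[X, Y] for all X, Y ∈ 𝔍 ⊕ 𝔍. -/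
import Mathlib


private lemma ann {K : Type*} [Field K] {J : Type*} [AddCommGroup J] [Module K J]
    {P Q : J →ₗ[K] J} (h : Q ∘ₗ P = 0) {t : J} (ht : P t = t) : Q t = 0 := by
  have h' := LinearMap.congr_fun h t
  simp only [LinearMap.comp_apply, LinearMap.zero_apply] at h'
  rwa [ht] at h'

private lemma im0 {K : Type*} [Field K] {J : Type*} [AddCommGroup J] [Module K J]
    {P0 a : J →ₗ[K] J} (h00 : P0 ∘ₗ P0 = P0) (ha : P0 ∘ₗ a ∘ₗ P0 = a) (t : J) :
    P0 (a t) = a t := by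
  conv_lhs => rw [← ha]
  conv_rhs => rw [← ha]
  simp only [LinearMap.comp_apply]
  exact LinearMap.congr_fun h00 _

private lemma coreAll {K : Type*} [Field K] [CharZero K] {J : Type*} [LieRing J] [LieAlgebra K J]
    (Pp Pm P0 : J →ₗ[K] J)
    (hsum : Pp + Pm + P0 = LinearMap.id)
    (hpm : Pp ∘ₗ Pm = 0) (hmp : Pm ∘ₗ Pp = 0)
    (h0p : P0 ∘ₗ Pp = 0) (h0m : P0 ∘ₗ Pm = 0)
    (hsubp : ∀ x y : J, Pp ⁅Pp x, Pp y⁆ = ⁅Pp x, Pp y⁆)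
    (hsubm : ∀ x y : J, Pm ⁅Pm x, Pm y⁆ = ⁅Pm x, Pm y⁆)
    (habel : ∀ x y : J, ⁅P0 x, P0 y⁆ = 0)
    (hmixp : ∀ x y : J, Pp ⁅Pp x, P0 y⁆ = ⁅Pp x, P0 y⁆)
    (hmixm : ∀ x y : J, Pm ⁅Pm x, P0 y⁆ = ⁅Pm x, P0 y⁆)
    (x y α β : J) (hα : P0 α = α) (hβ : P0 β = β) :
    P0 (⁅(1/2:K) • Pp x - (1/2:K) • Pm x + α, y⁆
        + ⁅x, (1/2:K) • Pp y - (1/2:K) • Pm y + β⁆) = 0 ∧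
    ⁅(1/2:K) • Pp x - (1/2:K) • Pm x + α, (1/2:K) • Pp y - (1/2:K) • Pm y + β⁆
      - ((1/2:K) • Pp (⁅(1/2:K) • Pp x - (1/2:K) • Pm x + α, y⁆
            + ⁅x, (1/2:K) • Pp y - (1/2:K) • Pm y + β⁆)
         - (1/2:K) • Pm (⁅(1/2:K) • Pp x - (1/2:K) • Pm x + α, y⁆
            + ⁅x, (1/2:K) • Pp y - (1/2:K) • Pm y + β⁆))
      = -((1/4:K) • ⁅x, y⁆) := by
  have hx := LinearMap.congr_fun hsum x
  have hy := LinearMap.congr_fun hsum y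
  simp only [LinearMap.add_apply, LinearMap.id_apply] at hx hy
  set p := Pp x with hp
  set m := Pm x with hm
  set z := P0 x with hz
  set q := Pp y with hq
  set n := Pm y with hn
  set w := P0 y with hw
  -- plus brackets
  have B1 : Pp ⁅p, q⁆ = ⁅p, q⁆ := hsubp x y
  have B2 : Pp ⁅p, w⁆ = ⁅p, w⁆ := hmixp x y
  have B3 : Pp ⁅p, β⁆ = ⁅p, β⁆ := by have h' := hmixp x β; rwa [hβ] at h'
  have B4 : Pp ⁅z, q⁆ = ⁅z, q⁆ := by
    have h' := hmixp y x
    rw [← lie_skew, map_neg, h']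
  have B5 : Pp ⁅α, q⁆ = ⁅α, q⁆ := by
    have h' := hmixp y α
    rw [hα] at h'
    rw [← lie_skew, map_neg, h']
  -- minus brackets
  have C1 : Pm ⁅m, n⁆ = ⁅m, n⁆ := hsubm x y
  have C2 : Pm ⁅m, w⁆ = ⁅m, w⁆ := hmixm x y
  have C3 : Pm ⁅m, β⁆ = ⁅m, β⁆ := by have h' := hmixm x β; rwa [hβ] at h'
  have C4 : Pm ⁅z, n⁆ = ⁅z, n⁆ := by
    have h' := hmixm y x
    rw [← lie_skew, map_neg, h']
  have C5 : Pm ⁅α, n⁆ = ⁅α, n⁆ := by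
    have h' := hmixm y α
    rw [hα] at h'
    rw [← lie_skew, map_neg, h']
  -- zero brackets
  have Z1 : ⁅z, w⁆ = (0:J) := habel x y
  have Z2 : ⁅z, β⁆ = (0:J) := by have h' := habel x β; rwa [hβ] at h'
  have Z3 : ⁅α, w⁆ = (0:J) := by have h' := habel α y; rwa [hα] at h'
  have Z4 : ⁅α, β⁆ = (0:J) := by have h' := habel α β; rwa [hα, hβ] at h'
  -- derived zeros
  have B1m : Pm ⁅p, q⁆ = 0 := ann hmp B1
  have B1z : P0 ⁅p, q⁆ = 0 := ann h0p B1
  have B2m : Pm ⁅p, w⁆ = 0 := ann hmp B2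
  have B2z : P0 ⁅p, w⁆ = 0 := ann h0p B2
  have B3m : Pm ⁅p, β⁆ = 0 := ann hmp B3
  have B3z : P0 ⁅p, β⁆ = 0 := ann h0p B3
  have B4m : Pm ⁅z, q⁆ = 0 := ann hmp B4
  have B4z : P0 ⁅z, q⁆ = 0 := ann h0p B4
  have B5m : Pm ⁅α, q⁆ = 0 := ann hmp B5
  have B5z : P0 ⁅α, q⁆ = 0 := ann h0p B5
  have C1p : Pp ⁅m, n⁆ = 0 := ann hpm C1
  have C1z : P0 ⁅m, n⁆ = 0 := ann h0m C1
  have C2p : Pp ⁅m, w⁆ = 0 := ann hpm C2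
  have C2z : P0 ⁅m, w⁆ = 0 := ann h0m C2
  have C3p : Pp ⁅m, β⁆ = 0 := ann hpm C3
  have C3z : P0 ⁅m, β⁆ = 0 := ann h0m C3
  have C4p : Pp ⁅z, n⁆ = 0 := ann hpm C4
  have C4z : P0 ⁅z, n⁆ = 0 := ann h0m C4
  have C5p : Pp ⁅α, n⁆ = 0 := ann hpm C5
  have C5z : P0 ⁅α, n⁆ = 0 := ann h0m C5
  rw [← hx, ← hy]
  constructor
  · simp only [lie_add, add_lie, lie_sub, sub_lie, lie_smul, smul_lie,
      map_add, map_sub, map_smul, Z1, Z2, Z3, Z4,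
      B1z, B2z, B3z, B4z, B5z, C1z, C2z, C3z, C4z, C5z,
      smul_zero, add_zero, zero_add, sub_zero, zero_sub]
    match_scalars <;> norm_num
  · simp only [lie_add, add_lie, lie_sub, sub_lie, lie_smul, smul_lie,
      map_add, map_sub, map_smul, Z1, Z2, Z3, Z4,
      B1, B2, B3, B4, B5, B1m, B2m, B3m, B4m, B5m,
      C1, C2, C3, C4, C5, C1p, C2p, C3p, C4p, C5p,
      smul_zero, add_zero, zero_add, sub_zero, zero_sub]
    match_scalars <;> norm_num



/-- Theorem 4.5: if 𝔍 = 𝔍₊ ⊕ 𝔍₀ ⊕ 𝔍₋ with 𝔍₀ abelian and [𝔍±,𝔍₀] ⊆ 𝔍±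
(expressed via the projections P₊, P₋, P₀), r = (1/2)(P₊ - P₋), and a,b,c,d are any
linear operators on 𝔍₀, then R = [[r + aP₀, bP₀],[cP₀, r + dP₀]] on 𝔍 ⊕ 𝔍 satisfies
the modified classical Yang-Baxter equation. -/
theorem block_r_matrix_mcybe (K : Type*) [Field K] [CharZero K]
    (J : Type*) [LieRing J] [LieAlgebra K J]
    (Pp Pm P0 : J →ₗ[K] J)
    (hsum : Pp + Pm + P0 = LinearMap.id)
    (hpp : Pp ∘ₗ Pp = Pp) (hmm : Pm ∘ₗ Pm = Pm) (h00 : P0 ∘ₗ P0 = P0)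
    (hpm : Pp ∘ₗ Pm = 0) (hmp : Pm ∘ₗ Pp = 0)
    (hp0 : Pp ∘ₗ P0 = 0) (h0p : P0 ∘ₗ Pp = 0)
    (hm0 : Pm ∘ₗ P0 = 0) (h0m : P0 ∘ₗ Pm = 0)
    (hsubp : ∀ x y : J, Pp ⁅Pp x, Pp y⁆ = ⁅Pp x, Pp y⁆)
    (hsubm : ∀ x y : J, Pm ⁅Pm x, Pm y⁆ = ⁅Pm x, Pm y⁆)
    (habel : ∀ x y : J, ⁅P0 x, P0 y⁆ = 0)
    (hmixp : ∀ x y : J, Pp ⁅Pp x, P0 y⁆ = ⁅Pp x, P0 y⁆)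
    (hmixm : ∀ x y : J, Pm ⁅Pm x, P0 y⁆ = ⁅Pm x, P0 y⁆)
    (a b c d : J →ₗ[K] J)
    (ha : P0 ∘ₗ a ∘ₗ P0 = a) (hb : P0 ∘ₗ b ∘ₗ P0 = b)
    (hc : P0 ∘ₗ c ∘ₗ P0 = c) (hd : P0 ∘ₗ d ∘ₗ P0 = d) :
    ∀ X Y : J × J,
      let r : J →ₗ[K] J := (1 / 2 : K) • (Pp - Pm)
      let R : J × J → J × J := fun Z =>
        (r Z.1 + a (P0 Z.1) + b (P0 Z.2), c (P0 Z.1) + r Z.2 + d (P0 Z.2))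
      let bk : J × J → J × J → J × J := fun U V => (⁅U.1, V.1⁆, ⁅U.2, V.2⁆)
      bk (R X) (R Y) - R (bk (R X) Y + bk X (R Y)) = -((1 / 4 : K) • bk X Y) := by
  intro X Y
  obtain ⟨x₁, x₂⟩ := X
  obtain ⟨y₁, y₂⟩ := Y
  dsimp only
  have hr : ∀ t : J, ((1/2:K) • (Pp - Pm)) t = (1/2:K) • Pp t - (1/2:K) • Pm t := by
    intro t
    simp [smul_sub]
  simp only [hr, Prod.mk_add_mk]
  have e₁ : (1/2:K) • Pp x₁ - (1/2:K) • Pm x₁ + a (P0 x₁) + b (P0 x₂)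
      = (1/2:K) • Pp x₁ - (1/2:K) • Pm x₁ + (a (P0 x₁) + b (P0 x₂)) := add_assoc _ _ _
  have e₂ : (1/2:K) • Pp y₁ - (1/2:K) • Pm y₁ + a (P0 y₁) + b (P0 y₂)
      = (1/2:K) • Pp y₁ - (1/2:K) • Pm y₁ + (a (P0 y₁) + b (P0 y₂)) := add_assoc _ _ _
  have e₃ : c (P0 x₁) + ((1/2:K) • Pp x₂ - (1/2:K) • Pm x₂) + d (P0 x₂)
      = (1/2:K) • Pp x₂ - (1/2:K) • Pm x₂ + (c (P0 x₁) + d (P0 x₂)) := by abel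
  have e₄ : c (P0 y₁) + ((1/2:K) • Pp y₂ - (1/2:K) • Pm y₂) + d (P0 y₂)
      = (1/2:K) • Pp y₂ - (1/2:K) • Pm y₂ + (c (P0 y₁) + d (P0 y₂)) := by abel
  rw [e₁, e₂, e₃, e₄]
  have hα1 : P0 (a (P0 x₁) + b (P0 x₂)) = a (P0 x₁) + b (P0 x₂) := by
    rw [map_add, im0 h00 ha, im0 h00 hb]
  have hβ1 : P0 (a (P0 y₁) + b (P0 y₂)) = a (P0 y₁) + b (P0 y₂) := by
    rw [map_add, im0 h00 ha, im0 h00 hb]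
  have hα2 : P0 (c (P0 x₁) + d (P0 x₂)) = c (P0 x₁) + d (P0 x₂) := by
    rw [map_add, im0 h00 hc, im0 h00 hd]
  have hβ2 : P0 (c (P0 y₁) + d (P0 y₂)) = c (P0 y₁) + d (P0 y₂) := by
    rw [map_add, im0 h00 hc, im0 h00 hd]
  obtain ⟨h10, h1⟩ := coreAll Pp Pm P0 hsum hpm hmp h0p h0m hsubp hsubm habel hmixp hmixm
    x₁ y₁ _ _ hα1 hβ1
  obtain ⟨h20, h2⟩ := coreAll Pp Pm P0 hsum hpm hmp h0p h0m hsubp hsubm habel hmixp hmixm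
    x₂ y₂ _ _ hα2 hβ2
  rw [h10, h20]
  simp only [map_zero, add_zero, zero_add]
  rw [Prod.mk_sub_mk, Prod.smul_mk, Prod.neg_mk, Prod.mk.injEq]
  exact ⟨h1, h2⟩
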